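/- Let 0<q<∞ and φ ∈ G_q. Then the following are equivalent: (1) inf_{t>0} φ(t) > 0; (2) every measurable f:ℝⁿ→ℂ with ‖f‖_{M^φ_q} < ∞ is essentially bounded. Moreover, if inf_{t>0} φ(t) > 0, then ‖f‖_{L^∞} ≤ (inf_{t>0} φ(t))^{−1} ‖f‖_{M^φ_q} for every measurable f. -/

import Mathlib

open MeasureTheory Set
open scoped ENNReal NNReal

/-- The generalized Morrey norm `‖f‖_{M^φ_q}` on `ℝⁿ` (cubes realized as closed balls
for the sup metric on `Fin n → ℝ`). -/
noncomputable def morreyNorm (n : ℕ) (q : ℝ) (φ : ℝ → ℝ)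
    (f : (Fin n → ℝ) → ℂ) : ℝ≥0∞ :=
  ⨆ (x : Fin n → ℝ) (r : ℝ) (_ : 0 < r),
    ENNReal.ofReal (φ r) *
      ((volume (Metric.closedBall x r))⁻¹ *
        ∫⁻ y in Metric.closedBall x r, (‖f y‖₊ : ℝ≥0∞) ^ q) ^ (1 / q)

/-- The class `G_q`: nondecreasing functions `φ : (0,∞) → (0,∞)` such that
`t ↦ t^{-n/q} φ(t)` is nonincreasing on `(0,∞)`. -/
def IsGq (n : ℕ) (q : ℝ) (φ : ℝ → ℝ) : Prop :=
  (∀ t, 0 < t → 0 < φ t) ∧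
  (∀ s t, 0 < s → s ≤ t → φ s ≤ φ t) ∧
  (∀ s t, 0 < s → s ≤ t → t ^ (-((n : ℝ) / q)) * φ t ≤ s ^ (-((n : ℝ) / q)) * φ s)

/-- for `φ ∈ G_q`, `inf_{t>0} φ(t) > 0` iff every `f` with finite
generalized Morrey norm is essentially bounded; moreover if `c > 0` is a lower
bound for `φ` on `(0,∞)` (in particular for `c = inf φ`), then
`‖f‖_{L^∞} ≤ c⁻¹ ‖f‖_{M^φ_q}` for every measurable `f`. -/
private lemma rpow_inv_rpow' {A : ℝ≥0∞} {q : ℝ} (hq : 0 < q) : (A ^ (1/q)) ^ q = A := by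
  rw [← ENNReal.rpow_mul, one_div, inv_mul_cancel₀ hq.ne', ENNReal.rpow_one]

private lemma rpow_rpow_inv' {A : ℝ≥0∞} {q : ℝ} (hq : 0 < q) : (A ^ q) ^ (1/q) = A := by
  rw [← ENNReal.rpow_mul, mul_one_div, div_self hq.ne', ENNReal.rpow_one]

private lemma morrey_essSup_bound (n : ℕ) {q : ℝ} (hq : 0 < q) (φ : ℝ → ℝ)
    {c : ℝ} (hc : 0 < c) (hcφ : ∀ t, 0 < t → c ≤ φ t)
    (f : (Fin n → ℝ) → ℂ) (hf : Measurable f) :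
    essSup (fun x => (‖f x‖₊ : ℝ≥0∞)) volume ≤
      (ENNReal.ofReal c)⁻¹ * morreyNorm n q φ f := by
  set M := morreyNorm n q φ f with hM
  have hcne : ENNReal.ofReal c ≠ 0 := (ENNReal.ofReal_pos.2 hc).ne'
  rcases eq_top_or_lt_top M with htop | hlt
  · rw [htop, ENNReal.mul_top (ENNReal.inv_ne_zero.2 ENNReal.ofReal_ne_top)]
    exact le_top
  set K := (ENNReal.ofReal c)⁻¹ * M with hK
  have hKtop : K ≠ ⊤ := ENNReal.mul_ne_top (ENNReal.inv_ne_top.2 hcne) hlt.ne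
  have hball : ∀ (x : Fin n → ℝ) (r : ℝ), 0 < r →
      (∫⁻ y in Metric.closedBall x r, (‖f y‖₊ : ℝ≥0∞) ^ q) ≤
        K ^ q * volume (Metric.closedBall x r) := by
    intro x r hr
    set B := Metric.closedBall x r with hB
    set I := ∫⁻ y in B, (‖f y‖₊ : ℝ≥0∞) ^ q with hI
    have hvol : volume B = ENNReal.ofReal ((2*r)^n) := by
      have h0 := Real.volume_pi_closedBall x hr.le
      rwa [Fintype.card_fin] at h0
    have hvne : volume B ≠ 0 := by
      rw [hvol]
      exact (ENNReal.ofReal_pos.2 (by positivity)).ne'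
    have hvtop : volume B ≠ ⊤ := by rw [hvol]; exact ENNReal.ofReal_ne_top
    have h1 : ENNReal.ofReal (φ r) * ((volume B)⁻¹ * I) ^ (1/q) ≤ M := by
      rw [hM, morreyNorm]
      exact le_iSup_of_le x (le_iSup_of_le r (le_iSup_of_le hr le_rfl))
    have h2 : ENNReal.ofReal c * ((volume B)⁻¹ * I) ^ (1/q) ≤ M :=
      le_trans (mul_le_mul_left (ENNReal.ofReal_le_ofReal (hcφ r hr)) _) h1
    have h3 : ((volume B)⁻¹ * I) ^ (1/q) ≤ K := by
      rw [hK]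
      calc ((volume B)⁻¹ * I) ^ (1/q)
          = (ENNReal.ofReal c)⁻¹ * (ENNReal.ofReal c * ((volume B)⁻¹ * I) ^ (1/q)) := by
            rw [← mul_assoc, ENNReal.inv_mul_cancel hcne ENNReal.ofReal_ne_top, one_mul]
        _ ≤ (ENNReal.ofReal c)⁻¹ * M := mul_le_mul_right h2 _
    have h4 : (volume B)⁻¹ * I ≤ K ^ q := by
      have h5 := ENNReal.rpow_le_rpow h3 hq.le
      rwa [rpow_inv_rpow' hq] at h5
    calc I = volume B * ((volume B)⁻¹ * I) := by
          rw [← mul_assoc, ENNReal.mul_inv_cancel hvne hvtop, one_mul]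
      _ ≤ volume B * K ^ q := mul_le_mul_right h4 _
      _ = K ^ q * volume B := mul_comm _ _
  set h : (Fin n → ℝ) → ℝ≥0∞ := fun y => (‖f y‖₊ : ℝ≥0∞) ^ q with hhdef
  have hmeas : Measurable h := hf.enorm.pow measurable_const
  set ν := volume.withDensity h with hν
  have hνball : ∀ (x : Fin n → ℝ) (r : ℝ), 0 < r →
      ν (Metric.closedBall x r) ≤ K ^ q * volume (Metric.closedBall x r) := by
    intro x r hr
    rw [hν, withDensity_apply _ measurableSet_closedBall]
    exact hball x r hr
  haveI : IsLocallyFiniteMeasure ν := by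
    constructor
    intro x
    refine ⟨Metric.closedBall x 1, Metric.closedBall_mem_nhds x one_pos, ?_⟩
    refine lt_of_le_of_lt (hνball x 1 one_pos) (ENNReal.mul_lt_top ?_ ?_)
    · exact ENNReal.rpow_lt_top_of_nonneg hq.le hKtop
    · rw [show volume (Metric.closedBall x (1:ℝ)) = ENNReal.ofReal ((2*(1:ℝ))^n) from by
        simpa using volume_pi_closedBall x (zero_le_one)]
      exact ENNReal.ofReal_lt_top
  have hae := Besicovitch.ae_tendsto_rnDeriv ν volume
  have hrn : ν.rnDeriv volume =ᵐ[volume] h := Measure.rnDeriv_withDensity volume hmeas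
  have hle : ∀ᵐ x ∂volume, h x ≤ K ^ q := by
    filter_upwards [hae, hrn] with x hx hx2
    rw [← hx2]
    refine le_of_tendsto hx ?_
    filter_upwards [self_mem_nhdsWithin] with r hr
    exact ENNReal.div_le_of_le_mul (hνball x r hr)
  have hle2 : ∀ᵐ x ∂volume, (‖f x‖₊ : ℝ≥0∞) ≤ K := by
    filter_upwards [hle] with x hx
    have h5 := ENNReal.rpow_le_rpow hx (by positivity : (0:ℝ) ≤ 1/q)
    rwa [rpow_rpow_inv' hq, rpow_rpow_inv' hq] at h5
  exact essSup_le_of_ae_le _ hle2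

private lemma morrey_construction (n : ℕ) (hn : 0 < n) {q : ℝ} (hq : 0 < q) (φ : ℝ → ℝ)
    (hpos : ∀ t, 0 < t → 0 < φ t)
    (hmono : ∀ s t, 0 < s → s ≤ t → φ s ≤ φ t)
    (hdec : ∀ s t, 0 < s → s ≤ t →
      t ^ (-((n : ℝ) / q)) * φ t ≤ s ^ (-((n : ℝ) / q)) * φ s)
    (hsmall : ∀ ε : ℝ, 0 < ε → ∃ t, 0 < t ∧ t ≤ 1 ∧ φ t < ε) :
    ∃ f : (Fin n → ℝ) → ℂ, Measurable f ∧ morreyNorm n q φ f < ⊤ ∧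
      ∀ C : ℝ, ¬ (∀ᵐ x ∂volume, ‖f x‖ ≤ C) := by
  choose ρ hρ0 hρ1 hρφ using fun k : ℕ => hsmall ((4:ℝ)⁻¹ ^ k) (by positivity)
  set cc : ℕ → (Fin n → ℝ) := fun k => fun _ => 4 * k with hcc
  set Q : ℕ → Set (Fin n → ℝ) := fun k => Metric.closedBall (cc k) (ρ k) with hQ
  have hQmeas : ∀ k, MeasurableSet (Q k) := fun k => measurableSet_closedBall
  haveI : Nonempty (Fin n) := ⟨⟨0, hn⟩⟩
  have hQvol : ∀ k, volume (Q k) = ENNReal.ofReal ((2 * ρ k)^n) := by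
    intro k
    have h0 := Real.volume_pi_closedBall (cc k) (hρ0 k).le
    rwa [Fintype.card_fin] at h0
  have hdisj : ∀ j k, j ≠ k → ∀ y, y ∈ Q j → y ∉ Q k := by
    intro j k hjk y hyj hyk
    have hd : dist (cc j) (cc k) ≤ 2 := by
      calc dist (cc j) (cc k) ≤ dist (cc j) y + dist y (cc k) := dist_triangle _ _ _
        _ ≤ ρ j + ρ k := add_le_add (by rw [dist_comm]; exact Metric.mem_closedBall.1 hyj)
            (Metric.mem_closedBall.1 hyk)
        _ ≤ 2 := by linarith [hρ1 j, hρ1 k]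
    have key : ∀ a b : ℕ, a < b → (1:ℝ) ≤ |(a:ℝ) - b| := by
      intro a b hab
      rw [abs_sub_comm, abs_of_nonneg (sub_nonneg.2 (by exact_mod_cast hab.le))]
      have : (a:ℝ) + 1 ≤ b := by exact_mod_cast hab
      linarith
    have h1 : (1:ℝ) ≤ |(j:ℝ) - k| := by
      rcases hjk.lt_or_gt with hl | hl
      · exact key j k hl
      · rw [abs_sub_comm]; exact key k j hl
    have h4 : (4:ℝ) ≤ dist (cc j) (cc k) := by
      have e : dist (cc j) (cc k) = dist (4 * (j:ℝ)) (4 * (k:ℝ)) := dist_pi_const _ _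
      rw [e, Real.dist_eq, show 4*(j:ℝ) - 4*k = 4*((j:ℝ)-k) by ring, abs_mul,
        abs_of_nonneg (by norm_num : (0:ℝ) ≤ 4)]
      linarith
    linarith
  set g : (Fin n → ℝ) → ℝ≥0∞ :=
    fun y => ∑' k, (Q k).indicator (fun _ => ENNReal.ofReal ((2:ℝ)^k)) y with hg
  set f : (Fin n → ℝ) → ℂ := fun y => ((g y).toReal : ℂ) with hf
  have hgmeas : Measurable g :=
    Measurable.ennreal_tsum
    (fun k => measurable_const.indicator (hQmeas k))
  have hfmeas : Measurable f :=
    Complex.measurable_ofReal.comp (ENNReal.measurable_toReal.comp hgmeas)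
  have hgval : ∀ k y, y ∈ Q k → g y = ENNReal.ofReal ((2:ℝ)^k) := by
    intro k y hy
    exact (tsum_eq_single k (fun j hj =>
      indicator_of_notMem (fun hyj => hdisj j k hj y hyj hy) _)).trans
      (indicator_of_mem hy _)
  have hfval : ∀ k y, y ∈ Q k → f y = (((2:ℝ)^k : ℝ) : ℂ) := by
    intro k y hy
    simp only [hf, hgval k y hy, ENNReal.toReal_ofReal (by positivity : (0:ℝ) ≤ 2^k)]
  have hfval0 : ∀ y, (∀ k, y ∉ Q k) → f y = 0 := by
    intro y hy
    have h0 : g y = 0 := by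
      have : ∀ k : ℕ, (Q k).indicator (fun _ => ENNReal.ofReal ((2:ℝ)^k)) y = 0 :=
        fun k => indicator_of_notMem (hy k) _
      exact (tsum_congr this).trans tsum_zero
    simp [hf, h0]
  have hpow : ∀ y, (‖f y‖₊ : ℝ≥0∞) ^ q =
      ∑' k, (Q k).indicator (fun _ => ENNReal.ofReal ((2:ℝ)^k) ^ q) y := by
    intro y
    by_cases hy : ∃ k, y ∈ Q k
    · obtain ⟨k, hk⟩ := hy
      rw [tsum_eq_single k (fun j hj => indicator_of_notMem (fun hyj => hdisj j k hj y hyj hk) _),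
        indicator_of_mem hk, hfval k y hk]
      congr 1
      rw [← ENNReal.ofReal_coe_nnreal, coe_nnnorm, Complex.norm_real, Real.norm_eq_abs,
        abs_of_nonneg (by positivity)]
    · push_neg at hy
      rw [hfval0 y hy]
      simp only [nnnorm_zero, ENNReal.coe_zero, ENNReal.zero_rpow_of_pos hq]
      have : ∀ k : ℕ, (Q k).indicator (fun _ => ENNReal.ofReal ((2:ℝ)^k) ^ q) y = 0 :=
        fun k => indicator_of_notMem (hy k) _
      exact ((tsum_congr this).trans tsum_zero).symm
  have hint : ∀ (x : Fin n → ℝ) (r : ℝ),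
      (∫⁻ y in Metric.closedBall x r, (‖f y‖₊ : ℝ≥0∞) ^ q) =
        ∑' k, ENNReal.ofReal ((2:ℝ)^k) ^ q * volume (Q k ∩ Metric.closedBall x r) := by
    intro x r
    simp only [hpow]
    rw [lintegral_tsum (fun k => (measurable_const.indicator (hQmeas k)).aemeasurable)]
    congr 1
    funext k
    rw [lintegral_indicator_const (hQmeas k), Measure.restrict_apply (hQmeas k)]
  set T : ℝ≥0∞ := ∑' k : ℕ, ENNReal.ofReal ((2⁻¹:ℝ)^k) ^ q with hT
  have hterm : ∀ (x : Fin n → ℝ) (r : ℝ), 0 < r → ∀ k : ℕ,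
      ENNReal.ofReal (φ r) ^ q * ((volume (Metric.closedBall x r))⁻¹ *
        (ENNReal.ofReal ((2:ℝ)^k) ^ q * volume (Q k ∩ Metric.closedBall x r))) ≤
      ENNReal.ofReal ((2⁻¹:ℝ)^k) ^ q := by
    intro x r hr k
    have hφr := hpos r hr
    have hφk := hpos (ρ k) (hρ0 k)
    have hvol : volume (Metric.closedBall x r) = ENNReal.ofReal ((2*r)^n) := by
      have h0 := Real.volume_pi_closedBall x hr.le
      rwa [Fintype.card_fin] at h0
    have hVpos : (0:ℝ) < (2*r)^n := by positivity
    have hVkpos : (0:ℝ) < (2*ρ k)^n := pow_pos (by linarith [hρ0 k]) n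
    have hcap : volume (Q k ∩ Metric.closedBall x r) ≤
        ENNReal.ofReal (min ((2*ρ k)^n) ((2*r)^n)) := by
      rcases le_total ((2*ρ k)^n) ((2*r)^n) with hm | hm
      · rw [min_eq_left hm, ← hQvol k]
        exact measure_mono inter_subset_left
      · rw [min_eq_right hm, ← hvol]
        exact measure_mono inter_subset_right
    -- real-number core inequality
    have hreal : (φ r)^q * (((2*r)^n)⁻¹ * (((2:ℝ)^k)^q * min ((2*ρ k)^n) ((2*r)^n))) ≤
        ((2⁻¹:ℝ)^k)^q := by
      have hstep : (φ r)^q * (((2*r)^n)⁻¹ * (((2:ℝ)^k)^q * min ((2*ρ k)^n) ((2*r)^n))) ≤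
          (φ (ρ k) * 2^k)^q := by
        rcases le_total r (ρ k) with hrρ | hρr
        · have e1 : ((2*r)^n)⁻¹ * (((2:ℝ)^k)^q * min ((2*ρ k)^n) ((2*r)^n)) ≤ ((2:ℝ)^k)^q := by
            calc ((2*r)^n)⁻¹ * (((2:ℝ)^k)^q * min ((2*ρ k)^n) ((2*r)^n))
                ≤ ((2*r)^n)⁻¹ * (((2:ℝ)^k)^q * (2*r)^n) := by
                  have h2 : (0:ℝ) ≤ ((2:ℝ)^k)^q := Real.rpow_nonneg (by positivity) _
                  have h3 := min_le_right ((2*ρ k)^n) ((2*r)^n)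
                  have h4 : (0:ℝ) ≤ ((2*r)^n)⁻¹ := by positivity
                  exact mul_le_mul_of_nonneg_left (mul_le_mul_of_nonneg_left h3 h2) h4
              _ = ((2:ℝ)^k)^q := by field_simp
          calc (φ r)^q * (((2*r)^n)⁻¹ * (((2:ℝ)^k)^q * min ((2*ρ k)^n) ((2*r)^n)))
              ≤ (φ r)^q * ((2:ℝ)^k)^q :=
                mul_le_mul_of_nonneg_left e1 (Real.rpow_nonneg hφr.le _)
            _ ≤ (φ (ρ k))^q * ((2:ℝ)^k)^q := by
                have := Real.rpow_le_rpow hφr.le (hmono r (ρ k) hr hrρ) hq.le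
                exact mul_le_mul_of_nonneg_right this (Real.rpow_nonneg (by positivity) _)
            _ = (φ (ρ k) * 2^k)^q := (Real.mul_rpow hφk.le (by positivity)).symm
        · -- ρ k ≤ r, use the G_q decay
          have h0 := hdec (ρ k) r (hρ0 k) hρr
          have h1 : (r ^ (-((n:ℝ)/q)) * φ r) ^ q ≤ ((ρ k) ^ (-((n:ℝ)/q)) * φ (ρ k)) ^ q := by
            exact Real.rpow_le_rpow (mul_nonneg (Real.rpow_nonneg hr.le _) hφr.le) h0 hq.le
          have hrpow : ∀ s : ℝ, 0 < s → (s ^ (-((n:ℝ)/q))) ^ q = (s^n)⁻¹ := by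
            intro s hs
            rw [← Real.rpow_mul hs.le]
            rw [show (-((n:ℝ)/q)) * q = -(n:ℝ) by field_simp]
            rw [Real.rpow_neg hs.le, Real.rpow_natCast]
          rw [Real.mul_rpow (Real.rpow_nonneg hr.le _) hφr.le,
            Real.mul_rpow (Real.rpow_nonneg (hρ0 k).le _) hφk.le,
            hrpow r hr, hrpow (ρ k) (hρ0 k)] at h1
          -- h1 : (r^n)⁻¹ * (φ r)^q ≤ ((ρ k)^n)⁻¹ * (φ (ρ k))^q
          have hXne : (r:ℝ)^n ≠ 0 := (pow_pos hr n).ne'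
          have hYne : (ρ k)^n ≠ 0 := (pow_pos (hρ0 k) n).ne'
          have hkey : (φ r)^q * (((2*r)^n)⁻¹ * (2*ρ k)^n) ≤ (φ (ρ k))^q := by
            have e2 : (φ r)^q * (((2*r)^n)⁻¹ * (2*ρ k)^n) = ((r^n)⁻¹ * (φ r)^q) * (ρ k)^n := by
              rw [mul_pow, mul_pow, mul_inv]
              field_simp [hXne]
            rw [e2]
            calc ((r^n)⁻¹ * (φ r)^q) * (ρ k)^n ≤ (((ρ k)^n)⁻¹ * (φ (ρ k))^q) * (ρ k)^n :=
                  mul_le_mul_of_nonneg_right h1 (pow_nonneg (hρ0 k).le n)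
              _ = (φ (ρ k))^q := by
                  rw [mul_comm (((ρ k)^n)⁻¹) _, mul_assoc, inv_mul_cancel₀ hYne, mul_one]
          have e3 : min ((2*ρ k)^n) ((2*r)^n) ≤ (2*ρ k)^n := min_le_left _ _
          calc (φ r)^q * (((2*r)^n)⁻¹ * (((2:ℝ)^k)^q * min ((2*ρ k)^n) ((2*r)^n)))
              ≤ (φ r)^q * (((2*r)^n)⁻¹ * (((2:ℝ)^k)^q * (2*ρ k)^n)) := by
                have h2 : (0:ℝ) ≤ ((2:ℝ)^k)^q := Real.rpow_nonneg (by positivity) _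
                have h3 : (0:ℝ) ≤ (φ r)^q := Real.rpow_nonneg hφr.le _
                have h4 : (0:ℝ) ≤ ((2*r)^n)⁻¹ := by positivity
                exact mul_le_mul_of_nonneg_left
                  (mul_le_mul_of_nonneg_left (mul_le_mul_of_nonneg_left e3 h2) h4) h3
            _ = ((φ r)^q * (((2*r)^n)⁻¹ * (2*ρ k)^n)) * ((2:ℝ)^k)^q := by ring
            _ ≤ (φ (ρ k))^q * ((2:ℝ)^k)^q :=
                mul_le_mul_of_nonneg_right hkey (Real.rpow_nonneg (by positivity) _)
            _ = (φ (ρ k) * 2^k)^q := (Real.mul_rpow hφk.le (by positivity)).symm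
      refine hstep.trans ?_
      apply Real.rpow_le_rpow (by positivity) _ hq.le
      have h5 : φ (ρ k) * 2^k ≤ (4⁻¹:ℝ)^k * 2^k :=
        mul_le_mul_of_nonneg_right (hρφ k).le (by positivity)
      calc φ (ρ k) * 2^k ≤ (4⁻¹:ℝ)^k * 2^k := h5
        _ = (2⁻¹:ℝ)^k := by
          rw [← mul_pow]
          norm_num
    -- now transfer to ENNReal
    calc ENNReal.ofReal (φ r) ^ q * ((volume (Metric.closedBall x r))⁻¹ *
            (ENNReal.ofReal ((2:ℝ)^k) ^ q * volume (Q k ∩ Metric.closedBall x r)))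
        ≤ ENNReal.ofReal (φ r) ^ q * ((volume (Metric.closedBall x r))⁻¹ *
            (ENNReal.ofReal ((2:ℝ)^k) ^ q * ENNReal.ofReal (min ((2*ρ k)^n) ((2*r)^n)))) := by
          exact mul_le_mul_right (mul_le_mul_right (mul_le_mul_right hcap _) _) _
      _ = ENNReal.ofReal ((φ r)^q * (((2*r)^n)⁻¹ *
            (((2:ℝ)^k)^q * min ((2*ρ k)^n) ((2*r)^n)))) := by
          rw [hvol, ENNReal.ofReal_rpow_of_pos hφr,
            ENNReal.ofReal_rpow_of_pos (by positivity : (0:ℝ) < (2:ℝ)^k),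
            ← ENNReal.ofReal_inv_of_pos hVpos,
            ← ENNReal.ofReal_mul (by positivity : (0:ℝ) ≤ ((2:ℝ)^k)^q),
            ← ENNReal.ofReal_mul (by positivity : (0:ℝ) ≤ ((2*r)^n)⁻¹),
            ← ENNReal.ofReal_mul (Real.rpow_nonneg hφr.le _)]
      _ ≤ ENNReal.ofReal (((2⁻¹:ℝ)^k)^q) := ENNReal.ofReal_le_ofReal hreal
      _ = ENNReal.ofReal ((2⁻¹:ℝ)^k) ^ q :=
          (ENNReal.ofReal_rpow_of_pos (by positivity)).symm
  have hTlt : T < ⊤ := by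
    have he : ∀ k : ℕ, ENNReal.ofReal ((2⁻¹:ℝ)^k) ^ q = (ENNReal.ofReal (2⁻¹:ℝ) ^ q) ^ k := by
      intro k
      rw [ENNReal.ofReal_pow (by norm_num : (0:ℝ) ≤ 2⁻¹),
        ← ENNReal.rpow_natCast (ENNReal.ofReal 2⁻¹) k, ← ENNReal.rpow_mul, mul_comm,
        ENNReal.rpow_mul, ENNReal.rpow_natCast]
    rw [hT]
    simp only [he]
    rw [ENNReal.tsum_geometric]
    rw [ENNReal.inv_lt_top]
    apply tsub_pos_of_lt
    apply ENNReal.rpow_lt_one _ hq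
    rw [ENNReal.ofReal_lt_one]
    norm_num
  have hsum : ∀ (x : Fin n → ℝ) (r : ℝ), 0 < r →
      ENNReal.ofReal (φ r) ^ q * ((volume (Metric.closedBall x r))⁻¹ *
        ∫⁻ y in Metric.closedBall x r, (‖f y‖₊ : ℝ≥0∞) ^ q) ≤ T := by
    intro x r hr
    rw [hint x r, ← ENNReal.tsum_mul_left, ← ENNReal.tsum_mul_left]
    exact ENNReal.tsum_le_tsum (fun k => hterm x r hr k)
  have hnorm : morreyNorm n q φ f ≤ T ^ (1/q) := by
    rw [morreyNorm]
    refine iSup_le fun x => iSup_le fun r => iSup_le fun hr => ?_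
    have h1 := hsum x r hr
    have h2 := ENNReal.rpow_le_rpow h1 (by positivity : (0:ℝ) ≤ 1/q)
    rwa [ENNReal.mul_rpow_of_nonneg _ _ (by positivity : (0:ℝ) ≤ 1/q),
      rpow_rpow_inv' hq] at h2
  refine ⟨f, hfmeas, lt_of_le_of_lt hnorm
    (ENNReal.rpow_lt_top_of_nonneg (by positivity) hTlt.ne), ?_⟩
  intro C hC
  obtain ⟨k, hk⟩ := pow_unbounded_of_one_lt C (by norm_num : (1:ℝ) < 2)
  have hsub : Q k ⊆ {x | ¬ ‖f x‖ ≤ C} := by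
    intro y hy
    simp only [mem_setOf_eq, not_le]
    rw [hfval k y hy, Complex.norm_real, Real.norm_eq_abs, abs_of_nonneg (by positivity)]
    exact hk
  have h0 : volume (Q k) = 0 := measure_mono_null hsub (ae_iff.1 hC)
  rw [hQvol k] at h0
  have : (0:ℝ) < (2 * ρ k)^n := pow_pos (by linarith [hρ0 k]) n
  rw [ENNReal.ofReal_eq_zero] at h0
  linarith


theorem morrey_subset_Linfty_iff (n : ℕ) (q : ℝ) (hq : 0 < q)
    (φ : ℝ → ℝ) (hφ : IsGq n q φ) :
    ((∃ c : ℝ, 0 < c ∧ ∀ t, 0 < t → c ≤ φ t) ↔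
      (∀ f : (Fin n → ℝ) → ℂ, Measurable f → morreyNorm n q φ f < ⊤ →
        ∃ C : ℝ, ∀ᵐ x ∂volume, ‖f x‖ ≤ C)) ∧
    (∀ c : ℝ, 0 < c → (∀ t, 0 < t → c ≤ φ t) →
      ∀ f : (Fin n → ℝ) → ℂ, Measurable f →
        essSup (fun x => (‖f x‖₊ : ℝ≥0∞)) volume ≤
          (ENNReal.ofReal c)⁻¹ * morreyNorm n q φ f) := by
  obtain ⟨hpos, hmono, hdec⟩ := hφ
  refine ⟨⟨?_, ?_⟩, fun c hc hcφ f hf => morrey_essSup_bound n hq φ hc hcφ f hf⟩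
  · rintro ⟨c, hc, hcφ⟩ f hf hfin
    have h1 := morrey_essSup_bound n hq φ hc hcφ f hf
    have hKtop : (ENNReal.ofReal c)⁻¹ * morreyNorm n q φ f ≠ ⊤ :=
      ENNReal.mul_ne_top (ENNReal.inv_ne_top.2 (ENNReal.ofReal_pos.2 hc).ne') hfin.ne
    refine ⟨((ENNReal.ofReal c)⁻¹ * morreyNorm n q φ f).toReal, ?_⟩
    filter_upwards [ENNReal.ae_le_essSup (fun x => (‖f x‖₊ : ℝ≥0∞))] with x hx
    have h2 : (‖f x‖₊ : ℝ≥0∞) ≤ (ENNReal.ofReal c)⁻¹ * morreyNorm n q φ f := hx.trans h1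
    have h3 := ENNReal.toReal_mono hKtop h2
    simpa using h3
  · intro H
    by_contra hno
    push_neg at hno
    rcases Nat.eq_zero_or_pos n with hn0 | hn
    · subst hn0
      obtain ⟨t, ht, hlt⟩ := hno (φ 1) (hpos 1 one_pos)
      rcases le_total t 1 with h | h
      · have h2 := hdec t 1 ht h
        simp only [Nat.cast_zero, zero_div, neg_zero, Real.rpow_zero, one_mul] at h2
        linarith
      · linarith [hmono 1 t one_pos h]
    · have hsmall : ∀ ε : ℝ, 0 < ε → ∃ t, 0 < t ∧ t ≤ 1 ∧ φ t < ε := by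
        intro ε hε
        obtain ⟨t, ht, hlt⟩ := hno ε hε
        exact ⟨min t 1, lt_min ht one_pos, min_le_right _ _,
          lt_of_le_of_lt (hmono _ t (lt_min ht one_pos) (min_le_left _ _)) hlt⟩
      obtain ⟨f, hfm, hfin, hub⟩ :=
        morrey_construction n hn hq φ hpos hmono hdec hsmall
      obtain ⟨C, hC⟩ := H f hfm hfin
      exact hub C hC
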